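/- Consider the closed-loop system q̇ = ξ, χ̃̇ = Aχ̃ - Γ(q)ᵀξ, ė = D(z)ᵀB̄ᵀJ(q)ξ, H(q)ξ̇ = -K_P J(q)ᵀ B̄ D(z) e - K_D ξ - C(q,ξ)ξ + Γ(q)χ̃, where A is skew-symmetric, H(q) is symmetric positive definite with Ḣ = C + Cᵀ, and K_P, K_D > 0. Then U = ½χ̃ᵀχ̃ + ½ K_P eᵀe + ½ ξᵀH(q)ξ satisfies U̇ = -K_D ξᵀξ ≤ 0 along all solutions. -/

import Mathlib

open Matrix

private lemma hasDerivAt_dot {n : ℕ} {f g : ℝ → Fin n → ℝ} {f' g' : Fin n → ℝ} {t : ℝ}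
    (hf : ∀ i, HasDerivAt (fun s => f s i) (f' i) t)
    (hg : ∀ i, HasDerivAt (fun s => g s i) (g' i) t) :
    HasDerivAt (fun s => f s ⬝ᵥ g s) (f' ⬝ᵥ g t + f t ⬝ᵥ g') t := by
  have h : HasDerivAt (fun s => ∑ i, f s i * g s i)
      (∑ i, (f' i * g t i + f t i * g' i)) t :=
    HasDerivAt.fun_sum fun i _ => (hf i).mul (hg i)
  simpa [dotProduct, Finset.sum_add_distrib] using h

private lemma dot_mulVec_symm {n m : ℕ} (x : Fin n → ℝ) (M : Matrix (Fin n) (Fin m) ℝ)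
    (y : Fin m → ℝ) : x ⬝ᵥ M.mulVec y = y ⬝ᵥ Mᵀ.mulVec x := by
  rw [dotProduct_mulVec, ← mulVec_transpose, dotProduct_comm]

theorem closed_loop_lyapunov {nq p le mN mE : ℕ}
    (A : Matrix (Fin p) (Fin p) ℝ) (hA : A + Aᵀ = 0)
    (Bbar : Matrix (Fin mN) (Fin mE) ℝ)
    (H H' C : ℝ → Matrix (Fin nq) (Fin nq) ℝ)
    (J : ℝ → Matrix (Fin mN) (Fin nq) ℝ)
    (Γ : ℝ → Matrix (Fin nq) (Fin p) ℝ)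
    (Dz : ℝ → Matrix (Fin mE) (Fin le) ℝ)
    (K_P K_D : ℝ) (hKP : 0 < K_P) (hKD : 0 < K_D)
    (q ξ ξ' : ℝ → Fin nq → ℝ) (χ : ℝ → Fin p → ℝ) (e : ℝ → Fin le → ℝ)
    (hHsym : ∀ t, (H t)ᵀ = H t) (hHpd : ∀ t, (H t).PosDef)
    (hHderiv : ∀ t i j, HasDerivAt (fun s => H s i j) (H' t i j) t)
    (hHC : ∀ t, H' t = C t + (C t)ᵀ)
    (hq : ∀ t i, HasDerivAt (fun s => q s i) (ξ t i) t)
    (hχ : ∀ t i, HasDerivAt (fun s => χ s i)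
      ((A.mulVec (χ t) - (Γ t)ᵀ.mulVec (ξ t)) i) t)
    (he : ∀ t k, HasDerivAt (fun s => e s k)
      (((Dz t)ᵀ * Bbarᵀ * J t).mulVec (ξ t) k) t)
    (hξ : ∀ t i, HasDerivAt (fun s => ξ s i) (ξ' t i) t)
    (hODE : ∀ t, (H t).mulVec (ξ' t) =
      -(K_P • ((J t)ᵀ * Bbar * Dz t).mulVec (e t)) - K_D • ξ t
        - (C t).mulVec (ξ t) + (Γ t).mulVec (χ t))
    (U : ℝ → ℝ)
    (hU : ∀ t, U t = (1 / 2 : ℝ) * (χ t ⬝ᵥ χ t) + (1 / 2 : ℝ) * K_P * (e t ⬝ᵥ e t)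
      + (1 / 2 : ℝ) * (ξ t ⬝ᵥ (H t).mulVec (ξ t))) :
    ∀ t, HasDerivAt U (-(K_D * (ξ t ⬝ᵥ ξ t))) t ∧ -(K_D * (ξ t ⬝ᵥ ξ t)) ≤ 0 := by
  intro t
  constructor
  · have hUfun : U = fun s => (1 / 2 : ℝ) * (χ s ⬝ᵥ χ s) + (1 / 2 : ℝ) * K_P * (e s ⬝ᵥ e s)
      + (1 / 2 : ℝ) * (ξ s ⬝ᵥ (H s).mulVec (ξ s)) := funext hU
    -- notation shortcuts
    set a := χ t with ha
    set x := ξ t with hx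
    set x' := ξ' t with hx'
    set ee := e t with hee
    set c' := A.mulVec (χ t) - (Γ t)ᵀ.mulVec (ξ t) with hc'
    set de := ((Dz t)ᵀ * Bbarᵀ * J t).mulVec (ξ t) with hde
    -- derivative of χ⬝χ
    have h1 : HasDerivAt (fun s => χ s ⬝ᵥ χ s) (c' ⬝ᵥ a + a ⬝ᵥ c') t :=
      hasDerivAt_dot (hχ t) (hχ t)
    -- derivative of e⬝e
    have h2 : HasDerivAt (fun s => e s ⬝ᵥ e s) (de ⬝ᵥ ee + ee ⬝ᵥ de) t :=
      hasDerivAt_dot (he t) (he t)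
    -- derivative of components of H.mulVec ξ
    have hmv : ∀ i, HasDerivAt (fun s => (H s).mulVec (ξ s) i)
        (((H' t).mulVec x + (H t).mulVec x') i) t := by
      intro i
      have : HasDerivAt (fun s => ∑ j, H s i j * ξ s j)
          (∑ j, (H' t i j * ξ t j + H t i j * ξ' t j)) t :=
        HasDerivAt.fun_sum fun j _ => (hHderiv t i j).mul (hξ t j)
      simpa [mulVec, dotProduct, Finset.sum_add_distrib] using this
    have h3 : HasDerivAt (fun s => ξ s ⬝ᵥ (H s).mulVec (ξ s))
        (x' ⬝ᵥ (H t).mulVec x + x ⬝ᵥ ((H' t).mulVec x + (H t).mulVec x')) t :=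
      hasDerivAt_dot (hξ t) hmv
    have hD : HasDerivAt U
        ((1 / 2 : ℝ) * (c' ⬝ᵥ a + a ⬝ᵥ c') + (1 / 2 : ℝ) * K_P * (de ⬝ᵥ ee + ee ⬝ᵥ de)
          + (1 / 2 : ℝ) * (x' ⬝ᵥ (H t).mulVec x + x ⬝ᵥ ((H' t).mulVec x + (H t).mulVec x'))) t := by
      rw [hUfun]
      exact ((h1.const_mul _).add (h2.const_mul _)).add (h3.const_mul _)
    -- algebra: the derivative equals -K_D * (x ⬝ᵥ x)
    have key : (1 / 2 : ℝ) * (c' ⬝ᵥ a + a ⬝ᵥ c') + (1 / 2 : ℝ) * K_P * (de ⬝ᵥ ee + ee ⬝ᵥ de)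
          + (1 / 2 : ℝ) * (x' ⬝ᵥ (H t).mulVec x + x ⬝ᵥ ((H' t).mulVec x + (H t).mulVec x'))
        = -(K_D * (x ⬝ᵥ x)) := by
      have hAT : Aᵀ = -A := eq_neg_of_add_eq_zero_right hA
      have haAa : a ⬝ᵥ A.mulVec a = 0 := by
        have h := dot_mulVec_symm a A a
        rw [hAT, neg_mulVec, dotProduct_neg] at h
        linarith
      have hGam : a ⬝ᵥ (Γ t)ᵀ.mulVec x = x ⬝ᵥ (Γ t).mulVec a := by
        rw [dot_mulVec_symm, transpose_transpose]
      have hac : a ⬝ᵥ c' = -(x ⬝ᵥ (Γ t).mulVec a) := by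
        rw [hc', dotProduct_sub, haAa, hGam]; ring
      have hca : c' ⬝ᵥ a = -(x ⬝ᵥ (Γ t).mulVec a) := by
        rw [dotProduct_comm]; exact hac
      have htr : ((Dz t)ᵀ * Bbarᵀ * J t)ᵀ = (J t)ᵀ * Bbar * Dz t := by
        simp [Matrix.transpose_mul, Matrix.mul_assoc]
      have hde2 : ee ⬝ᵥ de = x ⬝ᵥ ((J t)ᵀ * Bbar * Dz t).mulVec ee := by
        rw [hde, dot_mulVec_symm, htr]
      have hde1 : de ⬝ᵥ ee = x ⬝ᵥ ((J t)ᵀ * Bbar * Dz t).mulVec ee := by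
        rw [dotProduct_comm]; exact hde2
      have hHsymdot : x' ⬝ᵥ (H t).mulVec x = x ⬝ᵥ (H t).mulVec x' := by
        rw [dot_mulVec_symm x (H t) x', hHsym, dotProduct_comm]
      have hH' : x ⬝ᵥ (H' t).mulVec x = 2 * (x ⬝ᵥ (C t).mulVec x) := by
        rw [hHC, add_mulVec, dotProduct_add]
        have : x ⬝ᵥ (C t)ᵀ.mulVec x = x ⬝ᵥ (C t).mulVec x := by
          rw [dot_mulVec_symm x ((C t)ᵀ) x, transpose_transpose]
        rw [this]; ring
      have hODEdot : x ⬝ᵥ (H t).mulVec x' =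
          -(K_P * (x ⬝ᵥ ((J t)ᵀ * Bbar * Dz t).mulVec ee)) - K_D * (x ⬝ᵥ x)
            - x ⬝ᵥ (C t).mulVec x + x ⬝ᵥ (Γ t).mulVec a := by
        rw [hx', hODE t]
        simp [dotProduct_add, dotProduct_sub, dotProduct_neg, dotProduct_smul]
        rfl
      rw [dotProduct_add, hac, hca, hde1, hde2, hHsymdot, hH', hODEdot]
      ring
    exact key ▸ hD
  · have h : 0 ≤ ξ t ⬝ᵥ ξ t :=
      Finset.sum_nonneg fun i _ => mul_self_nonneg _
    nlinarith
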